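/- Let S be a finite set of points in ℝ² with distinct x- and y-coordinates and injective priorities. If q is a query point such that no segment Inf(p) (for p ∈ S) intersects the vertical ray {(q.x, y) : y ≥ q.y}, then the 2-sided region {s ∈ S : s.x ≤ q.x, s.y ≥ q.y} is empty. -/
import Mathlib


/-- `IsRMQ S pr q p` : `p` is the maximum-priority point of `S` in the 2-sided
region (open to the top and left) with lower-right corner `q`, i.e. among
`{s ∈ S : s.x ≤ q.x, s.y ≥ q.y}`. -/
def IsRMQ (S : Finset (ℝ × ℝ)) (pr : ℝ × ℝ → ℝ) (q p : ℝ × ℝ) : Prop :=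
  p ∈ S ∧ p.1 ≤ q.1 ∧ q.2 ≤ p.2 ∧ ∀ s ∈ S, s.1 ≤ q.1 → q.2 ≤ s.2 → pr s ≤ pr p

/-- The line of influence of `p`: points `q` on the horizontal line `y = p.y`
with `q.x ≥ p.x` whose 2-sided range-maximum is `p`. -/
def InfLine (S : Finset (ℝ × ℝ)) (pr : ℝ × ℝ → ℝ) (p : ℝ × ℝ) : Set (ℝ × ℝ) :=
  {q | q.2 = p.2 ∧ p.1 ≤ q.1 ∧ IsRMQ S pr q p}

/-- General position: distinct points of `S` have distinct `x`- and `y`-coordinates. -/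
def GenPos (S : Finset (ℝ × ℝ)) : Prop :=
  ∀ p ∈ S, ∀ q ∈ S, p ≠ q → p.1 ≠ q.1 ∧ p.2 ≠ q.2

/-- If no line of influence intersects the upward vertical ray from `q`,
then the 2-sided region of `q` is empty. -/
theorem no_hit_implies_empty (S : Finset (ℝ × ℝ)) (pr : ℝ × ℝ → ℝ)
    (hgp : GenPos S) (hinj : Set.InjOn pr S) (q : ℝ × ℝ)
    (hmiss : ∀ p ∈ S, ∀ y : ℝ, q.2 ≤ y → (q.1, y) ∉ InfLine S pr p) :
    ¬ ∃ s ∈ S, s.1 ≤ q.1 ∧ q.2 ≤ s.2 := by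
  rintro ⟨s, hsS, hsx, hsy⟩
  obtain ⟨p, hp, hmax⟩ := (S.filter (fun s => s.1 ≤ q.1 ∧ q.2 ≤ s.2)).exists_max_image pr
    ⟨s, Finset.mem_filter.2 ⟨hsS, hsx, hsy⟩⟩
  rw [Finset.mem_filter] at hp
  obtain ⟨hpS, hpx, hpy⟩ := hp
  refine hmiss p hpS p.2 hpy ⟨rfl, hpx, hpS, hpx, le_refl _, ?_⟩
  intro t htS htx hty
  exact hmax t (Finset.mem_filter.2 ⟨htS, htx, hpy.trans hty⟩)
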